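/- Let Ω ⊆ ℝⁿ be open, let η be an N×N real matrix with ηᵀ = η and η·η = 1, let A : Ω → (Fin n → M_N(ℝ)) be a C² matrix-valued 1-form, and let U : Ω → M_N(ℝ) be a C³ map with U(x)ᵀ·η·U(x) = η for every x ∈ Ω (so each U(x) is invertible with U(x)⁻¹ = η·U(x)ᵀ·η). Suppose U satisfies the reduced RT-equation pointwise on Ω: ΔU = U·(δA) − (Uᵀ·η)⁻¹·S, where S(x) := Σ_k (∂_kU(x))ᵀ·η·(∂_kU(x)). Then the matrix-valued 1-form Ã′ with components Ã′_j := A_j − U⁻¹·∂_jU satisfies, pointwise on Ω: (i) δÃ′ = 0, i.e. Σ_k ∂_k(Ã′_k) = 0; and (ii) ΔÃ′_j = (δ(dA))_j − (δ(dU⁻¹ ∧ dU))_j for each j, where dU⁻¹ is the matrix-valued 1-form with components ∂_k(U⁻¹). -/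

import Mathlib

open Matrix

attribute [local instance] Matrix.normedAddCommGroup Matrix.normedSpace

/-- Partial derivative `∂_k f` of a matrix-valued map on `ℝⁿ`, in the `k`-th standard
coordinate direction (Fréchet derivative applied to the `k`-th basis vector). -/
noncomputable def pderiv4 {n N : ℕ} (f : (Fin n → ℝ) → Matrix (Fin N) (Fin N) ℝ)
    (k : Fin n) (x : Fin n → ℝ) : Matrix (Fin N) (Fin N) ℝ :=
  fderiv ℝ f x (Pi.single k 1)

/-- Euclidean Laplacian `Δ f = Σ_k ∂_k ∂_k f` acting componentwise. -/
noncomputable def lap4 {n N : ℕ} (f : (Fin n → ℝ) → Matrix (Fin N) (Fin N) ℝ)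
    (x : Fin n → ℝ) : Matrix (Fin N) (Fin N) ℝ :=
  ∑ k : Fin n, pderiv4 (pderiv4 f k) k x

/-- Euclidean codifferential `δA = Σ_k ∂_k A_k` of a matrix-valued 1-form. -/
noncomputable def codiff4 {n N : ℕ} (A : (Fin n → ℝ) → Fin n → Matrix (Fin N) (Fin N) ℝ)
    (x : Fin n → ℝ) : Matrix (Fin N) (Fin N) ℝ :=
  ∑ k : Fin n, pderiv4 (fun y => A y k) k x

/-- Exterior derivative of a matrix-valued 1-form: `(dA)_{ij} = ∂_i A_j − ∂_j A_i`. -/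
noncomputable def extd4 {n N : ℕ} (A : (Fin n → ℝ) → Fin n → Matrix (Fin N) (Fin N) ℝ)
    (x : Fin n → ℝ) (i j : Fin n) : Matrix (Fin N) (Fin N) ℝ :=
  pderiv4 (fun y => A y j) i x - pderiv4 (fun y => A y i) j x

/-- Euclidean codifferential of a matrix-valued 2-form: `(δF)_j = Σ_k ∂_k F_{kj}`. -/
noncomputable def codiff2form4 {n N : ℕ}
    (F : (Fin n → ℝ) → Fin n → Fin n → Matrix (Fin N) (Fin N) ℝ)
    (x : Fin n → ℝ) (j : Fin n) : Matrix (Fin N) (Fin N) ℝ :=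
  ∑ k : Fin n, pderiv4 (fun y => F y k j) k x

/-- Wedge product of matrix-valued 1-forms: `(ω ∧ u)_{ij} = ω_i·u_j − ω_j·u_i`. -/
noncomputable def wedge4 {n N : ℕ} (ω u : (Fin n → ℝ) → Fin n → Matrix (Fin N) (Fin N) ℝ)
    (x : Fin n → ℝ) (i j : Fin n) : Matrix (Fin N) (Fin N) ℝ :=
  ω x i * u x j - ω x j * u x i

/-! ### Auxiliary lemmas -/

/-- Matrix multiplication as a continuous bilinear map. -/
noncomputable def mulCLM (N : ℕ) : Matrix (Fin N) (Fin N) ℝ →L[ℝ] Matrix (Fin N) (Fin N) ℝ →L[ℝ]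
    Matrix (Fin N) (Fin N) ℝ :=
  LinearMap.toContinuousLinearMap
  { toFun := fun a => LinearMap.toContinuousLinearMap (LinearMap.mul ℝ _ a)
    map_add' := fun a b => by ext c; simp [add_mul]
    map_smul' := fun r a => by ext c; simp [smul_mul_assoc] }

@[simp] lemma mulCLM_apply {N : ℕ} (a b : Matrix (Fin N) (Fin N) ℝ) : mulCLM N a b = a * b := rfl

/-- Matrix transpose as a continuous linear map. -/
noncomputable def tCLM (N : ℕ) : Matrix (Fin N) (Fin N) ℝ →L[ℝ] Matrix (Fin N) (Fin N) ℝ :=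
  LinearMap.toContinuousLinearMap
  { toFun := fun a => aᵀ
    map_add' := fun a b => by ext i j; simp
    map_smul' := fun r a => by ext i j; simp }

@[simp] lemma tCLM_apply {N : ℕ} (a : Matrix (Fin N) (Fin N) ℝ) : tCLM N a = aᵀ := rfl

section helpers
variable {n N : ℕ} {f g : (Fin n → ℝ) → Matrix (Fin N) (Fin N) ℝ} {x : Fin n → ℝ}
  {k : Fin n} {Ω : Set (Fin n → ℝ)}

lemma pderiv4_congr (h : Set.EqOn f g Ω) (hΩ : IsOpen Ω) (hx : x ∈ Ω) :
    pderiv4 f k x = pderiv4 g k x := by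
  unfold pderiv4
  rw [Filter.EventuallyEq.fderiv_eq (Filter.eventuallyEq_of_mem (hΩ.mem_nhds hx) h)]

lemma pderiv4_sub (hf : DifferentiableAt ℝ f x) (hg : DifferentiableAt ℝ g x) :
    pderiv4 (fun y => f y - g y) k x = pderiv4 f k x - pderiv4 g k x := by
  unfold pderiv4; erw [fderiv_fun_sub hf hg]; rfl

lemma pderiv4_add (hf : DifferentiableAt ℝ f x) (hg : DifferentiableAt ℝ g x) :
    pderiv4 (fun y => f y + g y) k x = pderiv4 f k x + pderiv4 g k x := by
  unfold pderiv4; erw [fderiv_fun_add hf hg]; rfl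

lemma pderiv4_const (c : Matrix (Fin N) (Fin N) ℝ) :
    pderiv4 (fun _ => c) k x = 0 := by
  unfold pderiv4; rw [fderiv_fun_const]; rfl

lemma pderiv4_sum {ι : Type*} (s : Finset ι) (F : ι → (Fin n → ℝ) → Matrix (Fin N) (Fin N) ℝ)
    (h : ∀ i ∈ s, DifferentiableAt ℝ (F i) x) :
    pderiv4 (fun y => ∑ i ∈ s, F i y) k x = ∑ i ∈ s, pderiv4 (F i) k x := by
  unfold pderiv4; erw [fderiv_fun_sum h]
  exact map_sum (ContinuousLinearMap.apply ℝ (Matrix (Fin N) (Fin N) ℝ) (Pi.single k (1:ℝ) : Fin n → ℝ)) _ _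

lemma pderiv4_clm (L : Matrix (Fin N) (Fin N) ℝ →L[ℝ] Matrix (Fin N) (Fin N) ℝ)
    (hf : DifferentiableAt ℝ f x) :
    pderiv4 (fun y => L (f y)) k x = L (pderiv4 f k x) := by
  unfold pderiv4
  have : fderiv ℝ (fun y => L (f y)) x = L.comp (fderiv ℝ f x) :=
    (L.hasFDerivAt.comp x hf.hasFDerivAt).fderiv
  rw [this]; rfl

lemma hasFDerivAt_mmul {f' g' : (Fin n → ℝ) →L[ℝ] Matrix (Fin N) (Fin N) ℝ}
    (hf : HasFDerivAt f f' x) (hg : HasFDerivAt g g' x) :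
    HasFDerivAt (fun y => f y * g y)
      ((show (Fin n → ℝ) →L[ℝ] Matrix (Fin N) (Fin N) ℝ from ((mulCLM N).flip (g x)).comp f')
        + (show (Fin n → ℝ) →L[ℝ] Matrix (Fin N) (Fin N) ℝ from ((mulCLM N) (f x)).comp g')) x := by
  have h := ((mulCLM N).isBoundedBilinearMap.hasFDerivAt (f x, g x)).comp x (hf.prodMk hg)
  refine h.congr_fderiv (Eq.symm ?_)
  refine ContinuousLinearMap.ext fun v => ?_
  show f' v * g x + f x * g' v = f x * g' v + f' v * g x
  exact add_comm _ _

lemma DifferentiableAt.mmul (hf : DifferentiableAt ℝ f x) (hg : DifferentiableAt ℝ g x) :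
    DifferentiableAt ℝ (fun y => f y * g y) x :=
  (hasFDerivAt_mmul hf.hasFDerivAt hg.hasFDerivAt).differentiableAt

lemma pderiv4_mul (hf : DifferentiableAt ℝ f x) (hg : DifferentiableAt ℝ g x) :
    pderiv4 (fun y => f y * g y) k x = pderiv4 f k x * g x + f x * pderiv4 g k x := by
  have h := (hasFDerivAt_mmul hf.hasFDerivAt hg.hasFDerivAt).fderiv
  unfold pderiv4
  rw [h]
  rfl

lemma contDiffOn_mmul {m : WithTop ℕ∞} (hf : ContDiffOn ℝ m f Ω) (hg : ContDiffOn ℝ m g Ω) :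
    ContDiffOn ℝ m (fun y => f y * g y) Ω :=
  (mulCLM N).isBoundedBilinearMap.contDiff.comp_contDiffOn (hf.prodMk hg)

lemma contDiffOn_pderiv4 {m mm : WithTop ℕ∞} (hf : ContDiffOn ℝ mm f Ω) (hΩ : IsOpen Ω)
    (h : m + 1 ≤ mm) : ContDiffOn ℝ m (pderiv4 f k) Ω := by
  have h1 := hf.fderiv_of_isOpen hΩ h
  exact (ContinuousLinearMap.apply ℝ (Matrix (Fin N) (Fin N) ℝ)
    (Pi.single k 1 : Fin n → ℝ)).contDiff.comp_contDiffOn h1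

lemma diffAt_of_cd {m : WithTop ℕ∞} (hf : ContDiffOn ℝ m f Ω) (hm : 1 ≤ m) (hΩ : IsOpen Ω)
    (hx : x ∈ Ω) : DifferentiableAt ℝ f x :=
  (hf.contDiffAt (hΩ.mem_nhds hx)).differentiableAt (lt_of_lt_of_le zero_lt_one hm).ne'

lemma pderiv4_comm (hf : ContDiffOn ℝ 2 f Ω) (hΩ : IsOpen Ω) (hx : x ∈ Ω) (i j : Fin n) :
    pderiv4 (pderiv4 f i) j x = pderiv4 (pderiv4 f j) i x := by
  have hsym : IsSymmSndFDerivAt ℝ f x :=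
    (hf.contDiffAt (hΩ.mem_nhds hx)).isSymmSndFDerivAt (by simp [minSmoothness_of_isRCLikeNormedField])
  have hdf : DifferentiableAt ℝ (fderiv ℝ f) x :=
    ((hf.fderiv_of_isOpen hΩ (by norm_num)).contDiffAt (hΩ.mem_nhds hx)).differentiableAt
      one_ne_zero
  have key : ∀ a b : Fin n, pderiv4 (pderiv4 f a) b x
      = fderiv ℝ (fderiv ℝ f) x (Pi.single b 1) (Pi.single a 1) := by
    intro a b
    have h2 : fderiv ℝ (fun y => (ContinuousLinearMap.apply ℝ (Matrix (Fin N) (Fin N) ℝ)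
          (Pi.single a (1:ℝ) : Fin n → ℝ)) (fderiv ℝ f y)) x
        = (ContinuousLinearMap.apply ℝ (Matrix (Fin N) (Fin N) ℝ)
          (Pi.single a (1:ℝ) : Fin n → ℝ)).comp (fderiv ℝ (fderiv ℝ f) x) :=
      ((ContinuousLinearMap.apply ℝ (Matrix (Fin N) (Fin N) ℝ)
          (Pi.single a (1:ℝ) : Fin n → ℝ)).hasFDerivAt.comp x hdf.hasFDerivAt).fderiv
    show fderiv ℝ (fun y => fderiv ℝ f y (Pi.single a 1)) x (Pi.single b 1) = _
    rw [show (fun y => fderiv ℝ f y (Pi.single a (1:ℝ)))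
        = (fun y => (ContinuousLinearMap.apply ℝ (Matrix (Fin N) (Fin N) ℝ)
          (Pi.single a (1:ℝ) : Fin n → ℝ)) (fderiv ℝ f y)) from rfl, h2]
    rfl
  rw [key i j, key j i]
  exact hsym _ _

end helpers

theorem stmt_4 {n N : ℕ} (Ω : Set (Fin n → ℝ)) (hΩ : IsOpen Ω)
    (η : Matrix (Fin N) (Fin N) ℝ) (hη_symm : ηᵀ = η) (hη_sq : η * η = 1)
    (A : (Fin n → ℝ) → Fin n → Matrix (Fin N) (Fin N) ℝ)
    (hA : ContDiffOn ℝ 2 A Ω)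
    (U : (Fin n → ℝ) → Matrix (Fin N) (Fin N) ℝ)
    (hU : ContDiffOn ℝ 3 U Ω)
    (hU_grp : ∀ x ∈ Ω, (U x)ᵀ * η * U x = η)
    (hRT : ∀ x ∈ Ω,
      lap4 U x = U x * codiff4 A x -
        ((U x)ᵀ * η)⁻¹ * (∑ k : Fin n, (pderiv4 U k x)ᵀ * η * pderiv4 U k x)) :
    (∀ x ∈ Ω,
      codiff4 (fun y k => A y k - (U y)⁻¹ * pderiv4 U k y) x = 0) ∧
    (∀ x ∈ Ω, ∀ j : Fin n,
      lap4 (fun y => A y j - (U y)⁻¹ * pderiv4 U j y) x =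
        codiff2form4 (fun y => extd4 A y) x j -
          codiff2form4
            (wedge4 (fun y k => pderiv4 (fun z => (U z)⁻¹) k y)
              (fun y k => pderiv4 U k y)) x j) := by
  -- the smooth candidate inverse
  set W : (Fin n → ℝ) → Matrix (Fin N) (Fin N) ℝ := fun y => η * ((U y)ᵀ * η) with hWdef
  have hWU : ∀ x ∈ Ω, W x * U x = 1 := by
    intro x hx
    show (η * ((U x)ᵀ * η)) * U x = 1
    rw [mul_assoc, show ((U x)ᵀ * η) * U x = η from hU_grp x hx, hη_sq]
  have hUW : ∀ x ∈ Ω, U x * W x = 1 := fun x hx => mul_eq_one_comm.mp (hWU x hx)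
  have hinv : ∀ x ∈ Ω, (U x)⁻¹ = W x := fun x hx => Matrix.inv_eq_left_inv (hWU x hx)
  have hinv2 : ∀ x ∈ Ω, ((U x)ᵀ * η)⁻¹ = U x * η := by
    intro x hx
    refine Matrix.inv_eq_left_inv ?_
    calc (U x * η) * ((U x)ᵀ * η) = U x * (η * ((U x)ᵀ * η)) := by rw [mul_assoc]
    _ = 1 := hUW x hx
  -- smoothness facts
  have hW3 : ContDiffOn ℝ 3 W Ω := by
    have : W = fun y => ((mulCLM N η).comp (((mulCLM N).flip η).comp (tCLM N))) (U y) := rfl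
    rw [this]
    exact ((mulCLM N η).comp (((mulCLM N).flip η).comp (tCLM N))).contDiff.comp_contDiffOn hU
  have hU2 : ContDiffOn ℝ 2 U Ω := hU.of_le (by norm_num)
  have hW2 : ContDiffOn ℝ 2 W Ω := hW3.of_le (by norm_num)
  have hDu : ∀ k, ContDiffOn ℝ 2 (pderiv4 U k) Ω :=
    fun k => contDiffOn_pderiv4 hU hΩ (by norm_num)
  have hDW : ∀ k, ContDiffOn ℝ 2 (pderiv4 W k) Ω :=
    fun k => contDiffOn_pderiv4 hW3 hΩ (by norm_num)
  have hD2u : ∀ k l, ContDiffOn ℝ 1 (pderiv4 (pderiv4 U l) k) Ω :=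
    fun k l => contDiffOn_pderiv4 (hDu l) hΩ (by norm_num)
  have hAj : ∀ j, ContDiffOn ℝ 2 (fun y => A y j) Ω := fun j =>
    (ContinuousLinearMap.proj (R := ℝ) (φ := fun _ : Fin n => Matrix (Fin N) (Fin N) ℝ)
      j).contDiff.comp_contDiffOn hA
  have hDA : ∀ j k, ContDiffOn ℝ 1 (pderiv4 (fun y => A y j) k) Ω :=
    fun j k => contDiffOn_pderiv4 (hAj j) hΩ (by norm_num)
  have hB : ∀ k, ContDiffOn ℝ 2 (fun y => W y * pderiv4 U k y) Ω :=
    fun k => contDiffOn_mmul hW2 (hDu k)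
  have hDB1 : ∀ k l, ContDiffOn ℝ 1 (pderiv4 (fun y => W y * pderiv4 U k y) l) Ω :=
    fun k l => contDiffOn_pderiv4 (hB k) hΩ (by norm_num)
  -- differentiability shortcuts
  have dU : ∀ x ∈ Ω, DifferentiableAt ℝ U x :=
    fun x hx => diffAt_of_cd hU (by norm_num) hΩ hx
  have dW : ∀ x ∈ Ω, DifferentiableAt ℝ W x :=
    fun x hx => diffAt_of_cd hW3 (by norm_num) hΩ hx
  have dDu : ∀ k, ∀ x ∈ Ω, DifferentiableAt ℝ (pderiv4 U k) x :=
    fun k x hx => diffAt_of_cd (hDu k) (by norm_num) hΩ hx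
  have dDW : ∀ k, ∀ x ∈ Ω, DifferentiableAt ℝ (pderiv4 W k) x :=
    fun k x hx => diffAt_of_cd (hDW k) (by norm_num) hΩ hx
  have dD2u : ∀ k l, ∀ x ∈ Ω, DifferentiableAt ℝ (pderiv4 (pderiv4 U l) k) x :=
    fun k l x hx => diffAt_of_cd (hD2u k l) (by norm_num) hΩ hx
  have dAj : ∀ j, ∀ x ∈ Ω, DifferentiableAt ℝ (fun y => A y j) x :=
    fun j x hx => diffAt_of_cd (hAj j) (by norm_num) hΩ hx
  have dDA : ∀ j k, ∀ x ∈ Ω, DifferentiableAt ℝ (pderiv4 (fun y => A y j) k) x :=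
    fun j k x hx => diffAt_of_cd (hDA j k) (by norm_num) hΩ hx
  have dB : ∀ k, ∀ x ∈ Ω, DifferentiableAt ℝ (fun y => W y * pderiv4 U k y) x :=
    fun k x hx => diffAt_of_cd (hB k) (by norm_num) hΩ hx
  have dDB : ∀ k l, ∀ x ∈ Ω,
      DifferentiableAt ℝ (pderiv4 (fun y => W y * pderiv4 U k y) l) x :=
    fun k l x hx => diffAt_of_cd (hDB1 k l) (by norm_num) hΩ hx
  -- derivative of W
  have hDWval : ∀ k, ∀ x ∈ Ω, pderiv4 W k x = η * ((pderiv4 U k x)ᵀ * η) := by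
    intro k x hx
    have hWL : W = fun y =>
        ((mulCLM N η).comp (((mulCLM N).flip η).comp (tCLM N))) (U y) := rfl
    rw [hWL]
    exact pderiv4_clm _ (dU x hx)
  -- product rule for B k = W * ∂_k U
  have hDB : ∀ k l, ∀ x ∈ Ω, pderiv4 (fun y => W y * pderiv4 U k y) l x
      = pderiv4 W l x * pderiv4 U k x + W x * pderiv4 (pderiv4 U k) l x :=
    fun k l x hx => pderiv4_mul (dW x hx) (dDu k x hx)
  -- the key divergence identity: Σ_k ∂_k(W ∂_k U) = δA on Ω
  have hδB : ∀ x ∈ Ω, ∑ k : Fin n, pderiv4 (fun y => W y * pderiv4 U k y) k x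
      = codiff4 A x := by
    intro x hx
    have e1 : ∑ k : Fin n, pderiv4 (fun y => W y * pderiv4 U k y) k x
        = (∑ k : Fin n, pderiv4 W k x * pderiv4 U k x) + W x * lap4 U x := by
      rw [lap4, Finset.mul_sum, ← Finset.sum_add_distrib]
      exact Finset.sum_congr rfl fun k _ => hDB k k x hx
    have e2 : ∑ k : Fin n, pderiv4 W k x * pderiv4 U k x
        = η * ∑ k : Fin n, (pderiv4 U k x)ᵀ * η * pderiv4 U k x := by
      rw [Finset.mul_sum]
      refine Finset.sum_congr rfl fun k _ => ?_
      rw [hDWval k x hx, mul_assoc, mul_assoc]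
    have e3 : W x * lap4 U x
        = codiff4 A x - η * ∑ k : Fin n, (pderiv4 U k x)ᵀ * η * pderiv4 U k x := by
      rw [hRT x hx, hinv2 x hx, mul_sub, ← mul_assoc, hWU x hx, one_mul,
        ← mul_assoc, ← mul_assoc, hWU x hx, one_mul]
    rw [e1, e2, e3]
    abel
  -- Part (i)
  have part1 : ∀ x ∈ Ω,
      codiff4 (fun y k => A y k - (U y)⁻¹ * pderiv4 U k y) x = 0 := by
    intro x hx
    have e1 : codiff4 (fun y k => A y k - (U y)⁻¹ * pderiv4 U k y) x
        = ∑ k : Fin n, (pderiv4 (fun y => A y k) k x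
            - pderiv4 (fun y => W y * pderiv4 U k y) k x) := by
      rw [codiff4]
      refine Finset.sum_congr rfl fun k _ => ?_
      have hcg : pderiv4 (fun y => A y k - (U y)⁻¹ * pderiv4 U k y) k x
          = pderiv4 (fun y => A y k - W y * pderiv4 U k y) k x :=
        pderiv4_congr (fun y hy => by rw [hinv y hy]) hΩ hx
      rw [hcg, pderiv4_sub (dAj k x hx) (dB k x hx)]
    rw [e1, Finset.sum_sub_distrib, hδB x hx, codiff4, sub_self]
  refine ⟨part1, ?_⟩
  -- Part (ii)
  intro x hx j
  -- abbreviations at x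
  set Du : Fin n → Matrix (Fin N) (Fin N) ℝ := fun k => pderiv4 U k x with hDu_def
  -- LHS decomposition
  have hLHS : lap4 (fun y => A y j - (U y)⁻¹ * pderiv4 U j y) x
      = lap4 (fun y => A y j) x
        - ∑ k : Fin n, pderiv4 (pderiv4 (fun y => W y * pderiv4 U j y) k) k x := by
    rw [lap4, lap4, ← Finset.sum_sub_distrib]
    refine Finset.sum_congr rfl fun k _ => ?_
    have e1 : Set.EqOn (pderiv4 (fun y => A y j - (U y)⁻¹ * pderiv4 U j y) k)
        (fun y => pderiv4 (fun z => A z j) k y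
          - pderiv4 (fun z => W z * pderiv4 U j z) k y) Ω := by
      intro y hy
      have hcg : pderiv4 (fun z => A z j - (U z)⁻¹ * pderiv4 U j z) k y
          = pderiv4 (fun z => A z j - W z * pderiv4 U j z) k y :=
        pderiv4_congr (fun z hz => by rw [hinv z hz]) hΩ hy
      show pderiv4 (fun z => A z j - (U z)⁻¹ * pderiv4 U j z) k y = _
      rw [hcg, pderiv4_sub (dAj j y hy) (dB j y hy)]
    rw [pderiv4_congr e1 hΩ hx, pderiv4_sub (dDA j k x hx) (dDB j k x hx)]
  -- first term of RHS
  have hT1 : codiff2form4 (fun y => extd4 A y) x j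
      = lap4 (fun y => A y j) x
        - ∑ k : Fin n, pderiv4 (pderiv4 (fun y => A y k) j) k x := by
    rw [codiff2form4, lap4, ← Finset.sum_sub_distrib]
    refine Finset.sum_congr rfl fun k _ => ?_
    show pderiv4 (fun y => pderiv4 (fun z => A z j) k y - pderiv4 (fun z => A z k) j y) k x = _
    rw [pderiv4_sub (dDA j k x hx) (dDA k j x hx)]
  -- second term of RHS
  have hT2 : codiff2form4
        (wedge4 (fun y k => pderiv4 (fun z => (U z)⁻¹) k y)
          (fun y k => pderiv4 U k y)) x j
      = ∑ k : Fin n,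
          ((pderiv4 (pderiv4 W k) k x * Du j + pderiv4 W k x * pderiv4 (pderiv4 U j) k x)
            - (pderiv4 (pderiv4 W j) k x * Du k + pderiv4 W j x * pderiv4 (pderiv4 U k) k x)) := by
    rw [codiff2form4]
    refine Finset.sum_congr rfl fun k _ => ?_
    have e1 : Set.EqOn
        (fun y => wedge4 (fun y k => pderiv4 (fun z => (U z)⁻¹) k y)
          (fun y k => pderiv4 U k y) y k j)
        (fun y => pderiv4 W k y * pderiv4 U j y - pderiv4 W j y * pderiv4 U k y) Ω := by
      intro y hy
      have h1 : pderiv4 (fun z => (U z)⁻¹) k y = pderiv4 W k y :=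
        pderiv4_congr (fun z hz => hinv z hz) hΩ hy
      have h2 : pderiv4 (fun z => (U z)⁻¹) j y = pderiv4 W j y :=
        pderiv4_congr (fun z hz => hinv z hz) hΩ hy
      show pderiv4 (fun z => (U z)⁻¹) k y * pderiv4 U j y
          - pderiv4 (fun z => (U z)⁻¹) j y * pderiv4 U k y = _
      rw [h1, h2]
    rw [pderiv4_congr e1 hΩ hx,
      pderiv4_sub ((dDW k x hx).mmul (dDu j x hx)) ((dDW j x hx).mmul (dDu k x hx)),
      pderiv4_mul (dDW k x hx) (dDu j x hx), pderiv4_mul (dDW j x hx) (dDu k x hx)]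
  -- expansion of the Laplacian of B j
  have hlapB : ∀ k : Fin n, pderiv4 (pderiv4 (fun y => W y * pderiv4 U j y) k) k x
      = (pderiv4 (pderiv4 W k) k x * Du j + pderiv4 W k x * pderiv4 (pderiv4 U j) k x)
        + (pderiv4 W k x * pderiv4 (pderiv4 U j) k x
          + W x * pderiv4 (pderiv4 (pderiv4 U j) k) k x) := by
    intro k
    have e1 : Set.EqOn (pderiv4 (fun y => W y * pderiv4 U j y) k)
        (fun y => pderiv4 W k y * pderiv4 U j y + W y * pderiv4 (pderiv4 U j) k y) Ω :=
      fun y hy => hDB j k y hy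
    rw [pderiv4_congr e1 hΩ hx,
      pderiv4_add ((dDW k x hx).mmul (dDu j x hx)) ((dW x hx).mmul (dD2u k j x hx)),
      pderiv4_mul (dDW k x hx) (dDu j x hx), pderiv4_mul (dW x hx) (dD2u k j x hx)]
  -- symmetry of second derivatives of U, as functions on Ω
  have hsymU : ∀ k : Fin n, Set.EqOn (pderiv4 (pderiv4 U j) k) (pderiv4 (pderiv4 U k) j) Ω :=
    fun k y hy => pderiv4_comm hU2 hΩ hy j k
  have hsymA : ∀ k : Fin n,
      pderiv4 (pderiv4 (fun y => A y k) k) j x = pderiv4 (pderiv4 (fun y => A y k) j) k x :=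
    fun k => pderiv4_comm (hAj k) hΩ hx k j
  -- the key identity
  have hkey : ∑ k : Fin n,
      (pderiv4 W k x * pderiv4 (pderiv4 U j) k x
        + W x * pderiv4 (pderiv4 (pderiv4 U j) k) k x
        + (pderiv4 (pderiv4 W j) k x * Du k + pderiv4 W j x * pderiv4 (pderiv4 U k) k x))
      = ∑ k : Fin n, pderiv4 (pderiv4 (fun y => A y k) j) k x := by
    have step1 : ∀ k : Fin n,
        pderiv4 W k x * pderiv4 (pderiv4 U j) k x
          + W x * pderiv4 (pderiv4 (pderiv4 U j) k) k x
          + (pderiv4 (pderiv4 W j) k x * Du k + pderiv4 W j x * pderiv4 (pderiv4 U k) k x)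
        = pderiv4 (pderiv4 (fun y => W y * pderiv4 U k y) j) k x := by
      intro k
      have e1 : Set.EqOn (pderiv4 (fun y => W y * pderiv4 U k y) j)
          (fun y => pderiv4 W j y * pderiv4 U k y + W y * pderiv4 (pderiv4 U k) j y) Ω :=
        fun y hy => hDB k j y hy
      rw [pderiv4_congr e1 hΩ hx,
        pderiv4_add ((dDW j x hx).mmul (dDu k x hx)) ((dW x hx).mmul (dD2u j k x hx)),
        pderiv4_mul (dDW j x hx) (dDu k x hx), pderiv4_mul (dW x hx) (dD2u j k x hx)]
      have h1 : pderiv4 (pderiv4 U k) j x = pderiv4 (pderiv4 U j) k x :=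
        (hsymU k hx).symm
      have h2 : pderiv4 (pderiv4 (pderiv4 U k) j) k x
          = pderiv4 (pderiv4 (pderiv4 U j) k) k x :=
        pderiv4_congr (fun y hy => (hsymU k hy).symm) hΩ hx
      rw [h1, h2]
      abel
    rw [Finset.sum_congr rfl fun k _ => step1 k]
    have step2 : ∀ k : Fin n,
        pderiv4 (pderiv4 (fun y => W y * pderiv4 U k y) j) k x
        = pderiv4 (pderiv4 (fun y => W y * pderiv4 U k y) k) j x :=
      fun k => pderiv4_comm (hB k) hΩ hx j k
    rw [Finset.sum_congr rfl fun k _ => step2 k]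
    have step3 : ∑ k : Fin n, pderiv4 (pderiv4 (fun y => W y * pderiv4 U k y) k) j x
        = pderiv4 (fun y => ∑ k : Fin n, pderiv4 (fun z => W z * pderiv4 U k z) k y) j x :=
      (pderiv4_sum Finset.univ _ (fun k _ => dDB k k x hx)).symm
    have step4 : pderiv4 (fun y => ∑ k : Fin n, pderiv4 (fun z => W z * pderiv4 U k z) k y) j x
        = pderiv4 (fun y => ∑ k : Fin n, pderiv4 (fun z => A z k) k y) j x :=
      pderiv4_congr (fun y hy => hδB y hy) hΩ hx
    have step5 : pderiv4 (fun y => ∑ k : Fin n, pderiv4 (fun z => A z k) k y) j x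
        = ∑ k : Fin n, pderiv4 (pderiv4 (fun z => A z k) k) j x :=
      pderiv4_sum Finset.univ _ (fun k _ => dDA k k x hx)
    rw [step3, step4, step5]
    exact Finset.sum_congr rfl fun k _ => hsymA k
  -- assemble
  rw [hLHS, hT1, hT2]
  rw [Finset.sum_congr rfl fun k _ => hlapB k]
  rw [← hkey]
  rw [show (∑ k : Fin n,
      (pderiv4 (pderiv4 W k) k x * Du j + pderiv4 W k x * pderiv4 (pderiv4 U j) k x
        + (pderiv4 W k x * pderiv4 (pderiv4 U j) k x
          + W x * pderiv4 (pderiv4 (pderiv4 U j) k) k x)))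
    = (∑ k : Fin n,
        (pderiv4 W k x * pderiv4 (pderiv4 U j) k x
          + W x * pderiv4 (pderiv4 (pderiv4 U j) k) k x
          + (pderiv4 (pderiv4 W j) k x * Du k + pderiv4 W j x * pderiv4 (pderiv4 U k) k x)))
      + (∑ k : Fin n,
        (pderiv4 (pderiv4 W k) k x * Du j + pderiv4 W k x * pderiv4 (pderiv4 U j) k x
          - (pderiv4 (pderiv4 W j) k x * Du k + pderiv4 W j x * pderiv4 (pderiv4 U k) k x)))
    from by
      rw [← Finset.sum_add_distrib]
      exact Finset.sum_congr rfl fun k _ => by abel]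
  abel
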